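/- Let F ⊆ ℝ² be a nonempty bounded open connected set and let ℓ ≥ 1 be an integer. For every polynomial p in two variables of total degree at most ℓ − 1 there exists a unique vector field v = (v₁, v₂) with v₁, v₂ ∈ P^ℓ(ℝ²) such that ∂₁v₁ + ∂₂v₂ = p (as functions on ℝ²) and ∫_F v · (vrot r) dx = 0 for every r ∈ P^{ℓ+1}(ℝ²). In other words, the two-dimensional divergence restricted to the L²(F)-orthogonal complement in P^ℓ(ℝ²)² of the space {vrot r : r ∈ P^{ℓ+1}(ℝ²)} is a linear isomorphism onto P^{ℓ−1}(ℝ²). -/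

import Mathlib

open MvPolynomial MeasureTheory

/-- The two-dimensional vector curl `vrot r := (∂₂ r, −∂₁ r)` of a polynomial. -/
noncomputable def vrot2 (q : MvPolynomial (Fin 2) ℝ) : Fin 2 → MvPolynomial (Fin 2) ℝ :=
  ![pderiv 1 q, -pderiv 0 q]

namespace Div2Aux

local notation "MvP" => MvPolynomial (Fin 2) ℝ

theorem pderiv_comm2 (i j : Fin 2) (f : MvP) :
    pderiv i (pderiv j f) = pderiv j (pderiv i f) := by
  induction f using MvPolynomial.induction_on' with
  | add p q hp hq => simp [hp, hq]
  | monomial m a =>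
    rcases eq_or_ne i j with rfl | hij
    · rfl
    · simp only [pderiv_monomial]
      have h1 : (m - Finsupp.single j 1 : Fin 2 →₀ ℕ) i = m i := by
        simp [Finsupp.tsub_apply, Finsupp.single_eq_of_ne hij]
      have h2 : (m - Finsupp.single i 1 : Fin 2 →₀ ℕ) j = m j := by
        simp [Finsupp.tsub_apply, Finsupp.single_eq_of_ne hij.symm]
      rw [h1, h2]
      have h3 : m - Finsupp.single j 1 - Finsupp.single i 1
          = m - Finsupp.single i 1 - Finsupp.single j 1 := by
        ext k; simp only [Finsupp.tsub_apply]; omega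
      rw [h3]; ring_nf

noncomputable def antider (i : Fin 2) (q : MvP) : MvP :=
  ∑ m ∈ q.support, monomial (m + Finsupp.single i 1) (coeff m q / (m i + 1))

theorem pderiv_antider (i : Fin 2) (q : MvP) : pderiv i (antider i q) = q := by
  have : ∀ m : Fin 2 →₀ ℕ, ∀ a : ℝ,
      pderiv i (monomial (m + Finsupp.single i 1) (a / (m i + 1))) = monomial m a := by
    intro m a
    rw [pderiv_monomial]
    have h1 : (m + Finsupp.single i 1 : Fin 2 →₀ ℕ) - Finsupp.single i 1 = m := by
      ext k; simp
    have h2 : (m + Finsupp.single i 1 : Fin 2 →₀ ℕ) i = m i + 1 := by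
      simp [Finsupp.add_apply]
    rw [h1, h2]
    congr 1
    push_cast
    field_simp
  rw [antider, map_sum]
  simp_rw [this]
  exact q.support_sum_monomial_coeff

theorem totalDegree_antider_le (i : Fin 2) (q : MvP) :
    (antider i q).totalDegree ≤ q.totalDegree + 1 := by
  refine (totalDegree_finset_sum _ _).trans (Finset.sup_le fun m hm => ?_)
  refine (totalDegree_monomial_le _ _).trans ?_
  simp only [Function.id_def]
  have : (m + Finsupp.single i 1 : Fin 2 →₀ ℕ).sum (fun _ e => e)
      = m.sum (fun _ e => e) + 1 := by
    rw [Finsupp.sum_add_index' (fun _ => rfl) (fun _ _ _ => rfl)]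
    simp [Finsupp.sum_single_index]
  rw [this]
  exact Nat.add_le_add_right (le_totalDegree hm) 1

theorem totalDegree_pderiv_le (i : Fin 2) (q : MvP) {n : ℕ} (h : q.totalDegree ≤ n + 1) :
    (pderiv i q).totalDegree ≤ n := by
  conv_lhs => rw [q.as_sum, map_sum]
  refine (totalDegree_finset_sum _ _).trans (Finset.sup_le fun m hm => ?_)
  rw [pderiv_monomial]
  rcases eq_or_ne (m i) 0 with h0 | h0
  · simp [h0]
  · refine (totalDegree_monomial_le _ _).trans ?_
    simp only [Function.id_def]
    have hle : Finsupp.single i 1 ≤ m := by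
      rw [Finsupp.single_le_iff]; omega
    have hm' : (m - Finsupp.single i 1 : Fin 2 →₀ ℕ) + Finsupp.single i 1 = m :=
      tsub_add_cancel_of_le hle
    have : (m - Finsupp.single i 1 : Fin 2 →₀ ℕ).sum (fun _ e => e) + 1
        = m.sum (fun _ e => e) := by
      conv_rhs => rw [← hm', Finsupp.sum_add_index' (fun _ => rfl) (fun _ _ _ => rfl)]
      simp
    have h2 := le_totalDegree hm
    omega

theorem coeff_pderiv (i : Fin 2) (q : MvP) (m : Fin 2 →₀ ℕ) :
    coeff m (pderiv i q) = coeff (m + Finsupp.single i 1) q * (m i + 1) := by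
  conv_lhs => rw [q.as_sum, map_sum]
  simp_rw [pderiv_monomial, coeff_sum, coeff_monomial]
  rw [Finset.sum_eq_single (m + Finsupp.single i 1)]
  · have h1 : (m + Finsupp.single i 1 : Fin 2 →₀ ℕ) - Finsupp.single i 1 = m := by
      ext k; simp
    have h2 : (m + Finsupp.single i 1 : Fin 2 →₀ ℕ) i = m i + 1 := by simp
    rw [h1, h2, if_pos rfl]
    push_cast
    ring
  · intro k hk hne
    rcases eq_or_ne (k i) 0 with h0 | h0
    · split
      · simp [h0]
      · rfl
    · rw [if_neg]
      intro heq
      apply hne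
      have hle : Finsupp.single i 1 ≤ k := by rw [Finsupp.single_le_iff]; omega
      rw [← tsub_add_cancel_of_le hle, heq]
  · intro hnot
    rw [if_pos, notMem_support_iff.mp hnot]
    · simp
    · ext k; simp

theorem coeff_eq_zero_of_pderiv_eq_zero (i : Fin 2) (q : MvP) (h : pderiv i q = 0)
    (k : Fin 2 →₀ ℕ) (hk : k i ≠ 0) : coeff k q = 0 := by
  have hle : Finsupp.single i 1 ≤ k := by rw [Finsupp.single_le_iff]; omega
  have := coeff_pderiv i q (k - Finsupp.single i 1)
  rw [h, tsub_add_cancel_of_le hle, coeff_zero] at this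
  have hpos : ((k - Finsupp.single i 1 : Fin 2 →₀ ℕ) i : ℝ) + 1 ≠ 0 := by
    positivity
  field_simp at this
  exact (mul_eq_zero.mp this.symm).resolve_right hpos

theorem pderiv_one_antider_zero (c : MvP) (h : pderiv 1 c = 0) :
    pderiv 1 (antider 0 c) = 0 := by
  rw [antider, map_sum]
  refine Finset.sum_eq_zero fun m hm => ?_
  have hm1 : m 1 = 0 := by
    by_contra hne
    exact mem_support_iff.mp hm (coeff_eq_zero_of_pderiv_eq_zero 1 c h m hne)
  rw [pderiv_monomial]
  have : ((m + Finsupp.single 0 1 : Fin 2 →₀ ℕ) 1 : ℝ) = 0 := by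
    simp [hm1, Finsupp.single_apply]
  rw [this, mul_zero, map_zero]

theorem exists_vrot_of_div_eq_zero {ℓ : ℕ} (v0 v1 : MvP) (h0 : v0.totalDegree ≤ ℓ)
    (h1 : v1.totalDegree ≤ ℓ) (hdiv : pderiv 0 v0 + pderiv 1 v1 = 0) :
    ∃ r : MvP, r.totalDegree ≤ ℓ + 1 ∧ pderiv 1 r = v0 ∧ pderiv 0 r = -v1 := by
  set A := antider 1 v0 with hA
  set c := pderiv 0 A + v1 with hc
  have hA1 : pderiv 1 A = v0 := pderiv_antider 1 v0
  have hAdeg : A.totalDegree ≤ ℓ + 1 := (totalDegree_antider_le 1 v0).trans (by omega)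
  have hc1 : pderiv 1 c = 0 := by
    rw [hc, map_add, pderiv_comm2 1 0 A, hA1, hdiv]
  have hcdeg : c.totalDegree ≤ ℓ :=
    (totalDegree_add _ _).trans (max_le (totalDegree_pderiv_le 0 A hAdeg) h1)
  set B := antider 0 c with hB
  have hB0 : pderiv 0 B = c := pderiv_antider 0 c
  have hB1 : pderiv 1 B = 0 := pderiv_one_antider_zero c hc1
  have hBdeg : B.totalDegree ≤ ℓ + 1 := (totalDegree_antider_le 0 c).trans (by omega)
  refine ⟨A - B, ?_, ?_, ?_⟩
  · exact (totalDegree_sub _ _).trans (max_le hAdeg hBdeg)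
  · rw [map_sub, hA1, hB1, sub_zero]
  · rw [map_sub, hB0, hc]; ring

theorem eq_zero_of_eval_zero_on_open (q : MvP) (F : Set (Fin 2 → ℝ)) (hopen : IsOpen F)
    (hne : F.Nonempty) (h : ∀ x ∈ F, eval x q = 0) : q = 0 := by
  obtain ⟨x₀, hx₀⟩ := hne
  have hana : AnalyticOnNhd ℝ (fun x => eval x q) Set.univ :=
    AnalyticOnNhd.eval_mvPolynomial q
  have hev : (fun x => eval x q) =ᶠ[nhds x₀] 0 := by
    filter_upwards [hopen.mem_nhds hx₀] with x hx
    exact h x hx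
  have hz := hana.eqOn_zero_of_preconnected_of_eventuallyEq_zero
    isPreconnected_univ (Set.mem_univ x₀) hev
  apply MvPolynomial.funext
  intro x
  simpa using hz (Set.mem_univ x)

theorem integrableOn_eval (q : MvP) (F : Set (Fin 2 → ℝ)) (hbdd : Bornology.IsBounded F) :
    IntegrableOn (fun x => eval x q) F volume := by
  have hc : Continuous fun x : Fin 2 → ℝ => eval x q := MvPolynomial.continuous_eval q
  have hK : IsCompact (closure F) :=
    Metric.isCompact_of_isClosed_isBounded isClosed_closure hbdd.closure
  exact (hc.continuousOn.integrableOn_compact hK).mono_set subset_closure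

theorem integral_sq_pos (q : MvP) (hq : q ≠ 0) (F : Set (Fin 2 → ℝ)) (hopen : IsOpen F)
    (hne : F.Nonempty) (hbdd : Bornology.IsBounded F) :
    0 < ∫ x in F, eval x q * eval x q := by
  have hint : IntegrableOn (fun x => eval x q * eval x q) F volume := by
    have := integrableOn_eval (q * q) F hbdd
    simpa [map_mul] using this
  have hnn : 0 ≤ᵐ[volume.restrict F] fun x => eval x q * eval x q :=
    Filter.Eventually.of_forall fun x => mul_self_nonneg _
  rw [setIntegral_pos_iff_support_of_nonneg_ae hnn hint]
  set U := F ∩ {x | eval x q ≠ 0} with hU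
  have hUopen : IsOpen U :=
    hopen.inter (isOpen_ne.preimage (MvPolynomial.continuous_eval q))
  have hUne : U.Nonempty := by
    by_contra hcon
    rw [Set.not_nonempty_iff_eq_empty] at hcon
    refine hq (eq_zero_of_eval_zero_on_open q F hopen hne fun x hx => ?_)
    by_contra hne'
    have : x ∈ U := Set.mem_inter hx hne'
    rw [hcon] at this
    exact this
  refine lt_of_lt_of_le (hUopen.measure_pos volume hUne) (measure_mono ?_)
  rintro x ⟨hxF, hxne⟩
  exact ⟨by simpa using mul_self_ne_zero.mpr hxne, hxF⟩

end Div2Aux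

open Div2Aux

theorem div2_iso_vrot_orthogonal_complement (F : Set (Fin 2 → ℝ)) (hne : F.Nonempty)
    (hopen : IsOpen F) (hbdd : Bornology.IsBounded F) (hconn : IsConnected F)
    (ℓ : ℕ) (hℓ : 1 ≤ ℓ)
    (p : MvPolynomial (Fin 2) ℝ) (hp : p.totalDegree ≤ ℓ - 1) :
    ∃! v : Fin 2 → MvPolynomial (Fin 2) ℝ,
      (∀ i, (v i).totalDegree ≤ ℓ) ∧
      (∀ x : Fin 2 → ℝ, eval x (pderiv 0 (v 0)) + eval x (pderiv 1 (v 1)) = eval x p) ∧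
      (∀ r : MvPolynomial (Fin 2) ℝ, r.totalDegree ≤ ℓ + 1 →
        (∫ x in F, ∑ i, eval x (v i) * eval x (vrot2 r i)) = 0) := by
  classical
  have hInt : ∀ q : MvPolynomial (Fin 2) ℝ,
      IntegrableOn (fun x => eval x q) F volume := fun q => integrableOn_eval q F hbdd
  -- the integral functional
  let I : MvPolynomial (Fin 2) ℝ →ₗ[ℝ] ℝ :=
    { toFun := fun q => ∫ x in F, eval x q
      map_add' := by
        intro a b
        simp only [map_add]
        exact integral_add (hInt a) (hInt b)
      map_smul' := by
        intro c a
        have h : ∀ x : Fin 2 → ℝ, eval x (c • a) = c * eval x a := fun x => by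
          rw [smul_eq_C_mul, map_mul, eval_C]
        simp only [h, RingHom.id_apply, smul_eq_mul]
        exact MeasureTheory.integral_const_mul c _ }
  have hI : ∀ q, I q = ∫ x in F, eval x q := fun q => rfl
  -- the space of vector fields of degree ≤ ℓ
  set P := MvPolynomial.restrictTotalDegree (Fin 2) ℝ ℓ with hPdef
  -- divergence as a linear map
  let D : (Fin 2 → P) →ₗ[ℝ] MvPolynomial (Fin 2) ℝ :=
    { toFun := fun v => pderiv 0 (v 0 : MvPolynomial (Fin 2) ℝ) + pderiv 1 (v 1)
      map_add' := by
        intro u v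
        simp only [Pi.add_apply, Submodule.coe_add, map_add]
        ring
      map_smul' := by
        intro c v
        simp only [Pi.smul_apply, Submodule.coe_smul, Derivation.map_smul, RingHom.id_apply,
          smul_add] }
  have hD : ∀ v : Fin 2 → P,
      D v = pderiv 0 (v 0 : MvPolynomial (Fin 2) ℝ) + pderiv 1 (v 1) := fun v => rfl
  -- the L²(F) bilinear form
  let B : LinearMap.BilinForm ℝ (Fin 2 → P) := LinearMap.mk₂ ℝ
    (fun u v => ∑ i, I ((u i : MvPolynomial (Fin 2) ℝ) * (v i : MvPolynomial (Fin 2) ℝ)))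
    (fun u u' v => by
      simp only [Pi.add_apply, Submodule.coe_add, add_mul, map_add]
      rw [Finset.sum_add_distrib])
    (fun c u v => by
      simp only [Pi.smul_apply, Submodule.coe_smul, smul_mul_assoc, LinearMap.map_smul,
        smul_eq_mul, Finset.mul_sum])
    (fun u v v' => by
      simp only [Pi.add_apply, Submodule.coe_add, mul_add, map_add]
      rw [Finset.sum_add_distrib])
    (fun c u v => by
      simp only [Pi.smul_apply, Submodule.coe_smul, mul_smul_comm, LinearMap.map_smul,
        smul_eq_mul, Finset.mul_sum])
  have hB : ∀ u v : Fin 2 → P,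
      B u v = ∑ i, I ((u i : MvPolynomial (Fin 2) ℝ) * (v i)) := fun u v => rfl
  have hBsymm : ∀ u v : Fin 2 → P, B u v = B v u := by
    intro u v
    rw [hB, hB]
    exact Finset.sum_congr rfl fun i _ => by rw [mul_comm]
  have hBrefl : B.IsRefl := fun u v h => by rw [hBsymm]; exact h
  have hBnonneg : ∀ q : MvPolynomial (Fin 2) ℝ, 0 ≤ I (q * q) := by
    intro q
    rw [hI]
    simp only [map_mul]
    exact setIntegral_nonneg hopen.measurableSet fun x _ => mul_self_nonneg _
  have hBzero : ∀ q : MvPolynomial (Fin 2) ℝ, I (q * q) = 0 → q = 0 := by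
    intro q h
    by_contra hq
    have := integral_sq_pos q hq F hopen hne hbdd
    rw [hI] at h
    simp only [map_mul] at h
    linarith
  have hpos : ∀ v : Fin 2 → P, B v v = 0 → v = 0 := by
    intro v hv
    rw [hB] at hv
    have hterm : ∀ i ∈ Finset.univ, I ((v i : MvPolynomial (Fin 2) ℝ) * (v i)) = 0 :=
      (Finset.sum_eq_zero_iff_of_nonneg fun i _ => hBnonneg _).mp hv
    funext i
    have := hBzero _ (hterm i (Finset.mem_univ i))
    exact Subtype.ext (by simpa using this)
  -- kernel of the divergence
  set K := LinearMap.ker D with hK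
  have hnd : (B.restrict K).Nondegenerate := by
    suffices hsl : LinearMap.SeparatingLeft (B.restrict K) from
      ⟨hsl, fun y hy => hsl y fun x => (hBsymm y.1 x.1).trans (hy x)⟩
    rintro ⟨x, hx⟩ h
    have hxx : B x x = 0 := h ⟨x, hx⟩
    exact Subtype.ext (hpos x hxx)
  haveI : FiniteDimensional ℝ (Fin 2 → P) := by infer_instance
  have hcompl : IsCompl K (B.orthogonal K) :=
    B.isCompl_orthogonal_of_restrict_nondegenerate hBrefl hnd
  have hmemP : ∀ q : MvPolynomial (Fin 2) ℝ, q.totalDegree ≤ ℓ → q ∈ P := by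
    intro q hq; rw [hPdef, MvPolynomial.mem_restrictTotalDegree]; exact hq
  have hvrotK : ∀ r : MvPolynomial (Fin 2) ℝ, r.totalDegree ≤ ℓ + 1 →
      ∃ vr : Fin 2 → P, (vr 0 : MvPolynomial (Fin 2) ℝ) = pderiv 1 r ∧
        (vr 1 : MvPolynomial (Fin 2) ℝ) = -pderiv 0 r ∧ vr ∈ K := by
    intro r hr
    refine ⟨![⟨pderiv 1 r, hmemP _ (totalDegree_pderiv_le 1 r hr)⟩,
      ⟨-pderiv 0 r, hmemP _ (by rw [totalDegree_neg]; exact totalDegree_pderiv_le 0 r hr)⟩],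
      rfl, rfl, ?_⟩
    rw [hK, LinearMap.mem_ker, hD]
    show pderiv 0 (pderiv 1 r) + pderiv 1 (-pderiv 0 r) = 0
    rw [map_neg, pderiv_comm2 0 1 r]
    ring
  have horthog : ∀ w : Fin 2 → P, w ∈ B.orthogonal K →
      ∀ r : MvPolynomial (Fin 2) ℝ, r.totalDegree ≤ ℓ + 1 →
      (∫ x in F, ∑ i, eval x ((w i : MvPolynomial (Fin 2) ℝ)) * eval x (vrot2 r i)) = 0 := by
    intro w hw r hr
    obtain ⟨vr, hv0, hv1, hvK⟩ := hvrotK r hr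
    have hzero : B vr w = 0 := (LinearMap.BilinForm.mem_orthogonal_iff.mp hw) vr hvK
    have hfun : (fun x => ∑ i, eval x ((w i : MvPolynomial (Fin 2) ℝ)) * eval x (vrot2 r i))
        = fun x => eval x ((vr 0 : MvPolynomial (Fin 2) ℝ) * (w 0 : MvPolynomial (Fin 2) ℝ)
            + (vr 1 : MvPolynomial (Fin 2) ℝ) * (w 1 : MvPolynomial (Fin 2) ℝ)) := by
      funext x
      simp only [Fin.sum_univ_two, vrot2, Matrix.cons_val_zero, Matrix.cons_val_one,
        Matrix.head_cons, map_add, map_mul, hv0, hv1]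
      ring
    rw [hfun, ← hI, map_add]
    rw [hB, Fin.sum_univ_two] at hzero
    exact hzero
  -- existence of a preimage
  have hpdeg : (antider 0 p).totalDegree ≤ ℓ :=
    (totalDegree_antider_le 0 p).trans (by omega)
  set v₀ : Fin 2 → P := ![⟨antider 0 p, hmemP _ hpdeg⟩, 0] with hv₀
  have hDv₀ : D v₀ = p := by
    rw [hD]
    show pderiv 0 (antider 0 p) + pderiv 1 ((0 : P) : MvPolynomial (Fin 2) ℝ) = p
    rw [pderiv_antider, ZeroMemClass.coe_zero, map_zero, add_zero]
  have hsup : v₀ ∈ K ⊔ B.orthogonal K := by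
    rw [hcompl.sup_eq_top]; exact Submodule.mem_top
  obtain ⟨k, hk, w, hw, hkw⟩ := Submodule.mem_sup.mp hsup
  have hDw : D w = p := by
    have h1 : D k + D w = D v₀ := by rw [← map_add, hkw]
    have h2 : D k = 0 := LinearMap.mem_ker.mp hk
    rw [h2, zero_add, hDv₀] at h1
    exact h1
  -- uniqueness
  have huniq : ∀ u v : Fin 2 → MvPolynomial (Fin 2) ℝ,
      ((∀ i, (u i).totalDegree ≤ ℓ) ∧
        (∀ x : Fin 2 → ℝ, eval x (pderiv 0 (u 0)) + eval x (pderiv 1 (u 1)) = eval x p) ∧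
        (∀ r : MvPolynomial (Fin 2) ℝ, r.totalDegree ≤ ℓ + 1 →
          (∫ x in F, ∑ i, eval x (u i) * eval x (vrot2 r i)) = 0)) →
      ((∀ i, (v i).totalDegree ≤ ℓ) ∧
        (∀ x : Fin 2 → ℝ, eval x (pderiv 0 (v 0)) + eval x (pderiv 1 (v 1)) = eval x p) ∧
        (∀ r : MvPolynomial (Fin 2) ℝ, r.totalDegree ≤ ℓ + 1 →
          (∫ x in F, ∑ i, eval x (v i) * eval x (vrot2 r i)) = 0)) → u = v := by
    rintro u v ⟨hu1, hu2, hu3⟩ ⟨hv1, hv2, hv3⟩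
    have hdiv : pderiv 0 (u 0 - v 0) + pderiv 1 (u 1 - v 1) = 0 := by
      apply MvPolynomial.funext; intro x
      have h1 := hu2 x
      have h2 := hv2 x
      simp only [map_sub, map_add, map_zero]
      linarith
    obtain ⟨r, hrdeg, hr1, hr0⟩ := exists_vrot_of_div_eq_zero (u 0 - v 0) (u 1 - v 1)
      ((totalDegree_sub _ _).trans (max_le (hu1 0) (hv1 0)))
      ((totalDegree_sub _ _).trans (max_le (hu1 1) (hv1 1))) hdiv
    have hint : ∀ z : Fin 2 → MvPolynomial (Fin 2) ℝ, IntegrableOn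
        (fun x => ∑ i, eval x (z i) * eval x (vrot2 r i)) F volume := by
      intro z
      have heq : (fun x => ∑ i, eval x (z i) * eval x (vrot2 r i))
          = fun x => eval x (z 0 * vrot2 r 0 + z 1 * vrot2 r 1) := by
        funext x; simp [Fin.sum_univ_two, map_add, map_mul]
      rw [heq]; exact hInt _
    have h3 := hu3 r hrdeg
    have h4 := hv3 r hrdeg
    have hsub : (∫ x in F, (eval x (u 0 - v 0) * eval x (u 0 - v 0)
        + eval x (u 1 - v 1) * eval x (u 1 - v 1))) = 0 := by
      have heq : (fun x => eval x (u 0 - v 0) * eval x (u 0 - v 0)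
              + eval x (u 1 - v 1) * eval x (u 1 - v 1))
          = fun x => (∑ i, eval x (u i) * eval x (vrot2 r i))
              - (∑ i, eval x (v i) * eval x (vrot2 r i)) := by
        funext x
        simp only [Fin.sum_univ_two, vrot2, Matrix.cons_val_zero, Matrix.cons_val_one,
          Matrix.head_cons, hr0, hr1, map_sub, map_neg, map_add]
        ring
      rw [heq, integral_sub (hint u) (hint v), h3, h4, sub_zero]
    have ha : IntegrableOn (fun x => eval x (u 0 - v 0) * eval x (u 0 - v 0)) F volume := by
      have := hInt ((u 0 - v 0) * (u 0 - v 0)); simpa [map_mul] using this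
    have hb : IntegrableOn (fun x => eval x (u 1 - v 1) * eval x (u 1 - v 1)) F volume := by
      have := hInt ((u 1 - v 1) * (u 1 - v 1)); simpa [map_mul] using this
    have hsplit := integral_add ha hb
    have hna : 0 ≤ ∫ x in F, eval x (u 0 - v 0) * eval x (u 0 - v 0) :=
      setIntegral_nonneg hopen.measurableSet fun x _ => mul_self_nonneg _
    have hnb : 0 ≤ ∫ x in F, eval x (u 1 - v 1) * eval x (u 1 - v 1) :=
      setIntegral_nonneg hopen.measurableSet fun x _ => mul_self_nonneg _
    rw [hsub] at hsplit
    have hd0z : u 0 - v 0 = 0 := by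
      by_contra hq
      have := integral_sq_pos (u 0 - v 0) hq F hopen hne hbdd
      linarith
    have hd1z : u 1 - v 1 = 0 := by
      by_contra hq
      have := integral_sq_pos (u 1 - v 1) hq F hopen hne hbdd
      linarith
    funext i
    fin_cases i
    · exact sub_eq_zero.mp hd0z
    · exact sub_eq_zero.mp hd1z
  -- assemble
  have hwprop : (∀ i, ((fun i => (w i : MvPolynomial (Fin 2) ℝ)) i).totalDegree ≤ ℓ) ∧
      (∀ x : Fin 2 → ℝ, eval x (pderiv 0 ((w 0 : MvPolynomial (Fin 2) ℝ)))
        + eval x (pderiv 1 ((w 1 : MvPolynomial (Fin 2) ℝ))) = eval x p) ∧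
      (∀ r : MvPolynomial (Fin 2) ℝ, r.totalDegree ≤ ℓ + 1 →
        (∫ x in F, ∑ i, eval x ((w i : MvPolynomial (Fin 2) ℝ)) * eval x (vrot2 r i)) = 0) := by
    refine ⟨?_, ?_, horthog w hw⟩
    · intro i
      exact (MvPolynomial.mem_restrictTotalDegree (Fin 2) (m := ℓ) ((w i : MvPolynomial (Fin 2) ℝ))).mp
        (w i).2
    · intro x
      have h : pderiv 0 ((w 0 : MvPolynomial (Fin 2) ℝ))
          + pderiv 1 ((w 1 : MvPolynomial (Fin 2) ℝ)) = p := by rw [← hD]; exact hDw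
      have := congrArg (eval x) h
      rw [map_add] at this
      exact this
  exact ⟨fun i => (w i : MvPolynomial (Fin 2) ℝ), hwprop,
    fun y hy => huniq y (fun i => (w i : MvPolynomial (Fin 2) ℝ)) hy hwprop⟩
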